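/- If B ⊆ ℂ^{K×K} has Lebesgue measure zero, then the preimage adj⁻¹(B) = {A ∈ ℂ^{K×K} : adj(A) ∈ B} also has Lebesgue measure zero, for K ≥ 2. -/

import Mathlib

open MeasureTheory

namespace AdjugateNullAux

open Complex Matrix Set

variable {K : ℕ}

local notation "E" => (Fin K → Fin K → ℂ)

lemma vol_haar (K : ℕ) : (volume : Measure (Fin K → Fin K → ℂ)).IsAddHaarMeasure := by
  haveI h2 : ∀ _ : Fin K, (volume : Measure (Fin K → ℂ)).IsOpenPosMeasure :=
    fun _ => inferInstance
  exact { toIsFiniteMeasureOnCompacts := inferInstance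
          toIsAddLeftInvariant := inferInstance
          toIsOpenPosMeasure := inferInstance }

lemma diff_coord (i j : Fin K) : Differentiable ℂ (fun M : E => M i j) := by
  have h1 : Differentiable ℂ (fun M : E => M i) :=
    differentiable_pi.mp differentiable_id i
  exact differentiable_pi.mp h1 j

lemma diff_prod {X : Type*} [NormedAddCommGroup X] [NormedSpace ℂ X]
    {ι : Type*} [DecidableEq ι] (u : Finset ι) (f : ι → X → ℂ)
    (h : ∀ i ∈ u, Differentiable ℂ (f i)) :
    Differentiable ℂ (fun x => ∏ i ∈ u, f i x) := by
  classical
  induction u using Finset.induction with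
  | empty => simpa using differentiable_const (1 : ℂ)
  | @insert a s ha ih =>
    simp only [Finset.prod_insert ha]
    exact (h a (Finset.mem_insert_self a s)).mul
      (ih fun i hi => h i (Finset.mem_insert_of_mem hi))

lemma diff_det {X : Type*} [NormedAddCommGroup X] [NormedSpace ℂ X]
    {f : X → Matrix (Fin K) (Fin K) ℂ}
    (h : ∀ i j, Differentiable ℂ fun x => f x i j) :
    Differentiable ℂ fun x => (f x).det := by
  classical
  simp only [Matrix.det_apply']
  exact Differentiable.fun_sum fun σ _ =>
    (diff_prod Finset.univ (fun i x => f x (σ i) i) fun i _ => h (σ i) i).const_mul _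

lemma diff_adj {X : Type*} [NormedAddCommGroup X] [NormedSpace ℂ X]
    {f : X → Matrix (Fin K) (Fin K) ℂ}
    (h : ∀ i j, Differentiable ℂ fun x => f x i j) (i j : Fin K) :
    Differentiable ℂ fun x => (f x).adjugate i j := by
  simp only [Matrix.adjugate_apply]
  apply diff_det
  intro r c
  simp only [Matrix.updateRow_apply]
  by_cases hr : r = j <;> simp [hr, h r c]

/-- The set of singular matrices is null. -/
lemma singular_null (K : ℕ) :
    volume {A : Fin K → Fin K → ℂ | (Matrix.of A).det = 0} = 0 := by
  haveI := vol_haar K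
  classical
  -- the maps replacing column j by a combination of the other columns
  set T : Fin K → (Fin K → Fin K → ℂ) → (Fin K → Fin K → ℂ) := fun j M r c =>
    if c = j then ∑ i, (if i = j then 0 else M i j * M r i) else M r c with hT
  have hdiff : ∀ j, Differentiable ℝ (T j) := by
    intro j
    rw [differentiable_pi]
    intro r
    rw [differentiable_pi]
    intro c
    have : Differentiable ℂ (fun M : Fin K → Fin K → ℂ => T j M r c) := by
      by_cases hc : c = j
      · simp only [hT, hc, if_pos rfl]
        exact Differentiable.fun_sum fun i _ => by
          by_cases hi : i = j
          · simp [hi]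
          · simpa [hi] using (diff_coord i j).fun_mul (diff_coord r i)
      · simpa only [hT, if_neg hc] using diff_coord r c
    exact this.restrictScalars ℝ
  have hnull : ∀ j : Fin K, volume {M : Fin K → Fin K → ℂ | M j j = 0} = 0 := by
    intro j
    set S : Submodule ℝ (Fin K → Fin K → ℂ) :=
      LinearMap.ker ((LinearMap.proj j : (Fin K → ℂ) →ₗ[ℝ] ℂ).comp
        (LinearMap.proj j : (Fin K → Fin K → ℂ) →ₗ[ℝ] (Fin K → ℂ))) with hS
    have hset : {M : Fin K → Fin K → ℂ | M j j = 0} = (S : Set (Fin K → Fin K → ℂ)) := by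
      ext M
      simp [hS, LinearMap.mem_ker]
    rw [hset]
    apply Measure.addHaar_submodule
    intro htop
    have hmem : (Pi.single j (Pi.single j (1:ℂ)) : Fin K → Fin K → ℂ) ∈ S :=
      htop.symm ▸ Submodule.mem_top
    simp [hS, LinearMap.mem_ker] at hmem
  have hsub : {A : Fin K → Fin K → ℂ | (Matrix.of A).det = 0} ⊆
      ⋃ j : Fin K, T j '' {M | M j j = 0} := by
    intro A hA
    obtain ⟨v, hv0, hv⟩ := (Matrix.exists_mulVec_eq_zero_iff).mpr hA
    obtain ⟨j, hvj⟩ := Function.ne_iff.mp hv0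
    simp only [Pi.zero_apply] at hvj
    set M : Fin K → Fin K → ℂ := fun r c =>
      if c = j then (if r = j then 0 else -(v r / v j)) else A r c with hM
    have hMj : M j j = 0 := by simp [hM]
    have hsum : ∀ r, ∑ i, A r i * v i = 0 := by
      intro r
      simpa [Matrix.mulVec, dotProduct] using congrFun hv r
    have hTA : T j M = A := by
      funext r c
      by_cases hc : c = j
      · subst hc
        simp only [hT, if_pos rfl]
        have expand : ∀ i : Fin K, (if i = c then 0 else M i c * M r i)
            = if i = c then 0 else -(v i / v c) * A r i := by
          intro i
          by_cases hi : i = c <;> simp [hM, hi]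
        rw [Finset.sum_congr rfl fun i _ => expand i]
        rw [← Finset.sum_erase_add _ _ (Finset.mem_univ c), if_pos rfl, add_zero]
        have h2 : ∑ i ∈ Finset.univ.erase c, (if i = c then (0:ℂ) else -(v i / v c) * A r i)
            = ∑ i ∈ Finset.univ.erase c, -(v i / v c) * A r i :=
          Finset.sum_congr rfl fun i hi => if_neg (Finset.mem_erase.mp hi).1
        rw [h2]
        have h1 : ∑ i ∈ Finset.univ.erase c, A r i * v i = - (A r c * v c) := by
          rw [Finset.sum_erase_eq_sub (Finset.mem_univ c), hsum r]
          ring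
        have h3 : ∑ i ∈ Finset.univ.erase c, -(v i / v c) * A r i
            = (∑ i ∈ Finset.univ.erase c, A r i * v i) * (-(1 / v c)) := by
          rw [Finset.sum_mul]
          exact Finset.sum_congr rfl fun i _ => by ring
        rw [h3, h1]
        field_simp
      · simp [hT, hc, hM]
    refine Set.mem_iUnion.mpr ⟨j, ⟨M, hMj, hTA⟩⟩
  refine measure_mono_null hsub (measure_iUnion_null fun j => ?_)
  exact addHaar_image_eq_zero_of_differentiableOn_of_addHaar_eq_zero volume
    ((hdiff j).differentiableOn) (hnull j)

noncomputable def expo (K : ℕ) : ℂ := ((2 : ℂ) - K) / ((K : ℂ) - 1)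

noncomputable def gmap (K : ℕ) (q u : ℂ) (M : Fin K → Fin K → ℂ) : Fin K → Fin K → ℂ :=
  fun i j => (u * (q * (Matrix.of M).det) ^ expo K) * (Matrix.of M).adjugate i j

lemma gmap_diffOn (q u : ℂ) :
    DifferentiableOn ℝ (gmap K q u) {M | q * (Matrix.of M).det ∈ Complex.slitPlane} := by
  intro M hM
  apply DifferentiableAt.differentiableWithinAt
  have hdet : Differentiable ℂ fun M : E => (Matrix.of M).det :=
    diff_det fun i j => diff_coord i j
  have hadj : ∀ i j, Differentiable ℂ fun M : E => (Matrix.of M).adjugate i j :=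
    fun i j => diff_adj (fun i j => diff_coord i j) i j
  have hc : DifferentiableAt ℂ (fun M : E => u * (q * (Matrix.of M).det) ^ expo K) M := by
    refine DifferentiableAt.const_mul ?_ u
    exact DifferentiableAt.cpow ((hdet.const_mul q).differentiableAt)
      (differentiableAt_const _) hM
  have : DifferentiableAt ℂ (gmap K q u) M := by
    rw [differentiableAt_pi]
    intro i
    rw [differentiableAt_pi]
    intro j
    exact hc.mul ((hadj i j).differentiableAt)
  exact this.restrictScalars ℝ

lemma slit_or {z : ℂ} (hz : z ≠ 0) :
    z ∈ Complex.slitPlane ∨ Complex.I * z ∈ Complex.slitPlane := by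
  simp only [Complex.mem_slitPlane_iff, Complex.mul_re, Complex.mul_im,
    Complex.I_re, Complex.I_im]
  by_contra h
  push_neg at h
  obtain ⟨⟨h1, h2⟩, h3, h4⟩ := h
  apply hz
  apply Complex.ext
  · simpa using h4
  · exact h2

lemma tset_countable (n : ℕ) (hn : 0 < n) (c : ℂ) : {u : ℂ | u ^ n = c}.Countable := by
  apply Set.Finite.countable
  apply Set.Finite.subset (Polynomial.nthRoots n c).toFinset.finite_toSet
  intro u hu
  simp only [Multiset.mem_toFinset, Finset.coe_sort_coe, Multiset.mem_coe,
    Finset.mem_coe]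
  rw [Polynomial.mem_nthRoots hn]
  exact hu

end AdjugateNullAux


theorem adjugate_preimage_null (K : ℕ) (hK : 2 ≤ K)
    (B : Set (Matrix (Fin K) (Fin K) ℂ))
    (hB : volume {A : Fin K → Fin K → ℂ | Matrix.of A ∈ B} = 0) :
    volume {A : Fin K → Fin K → ℂ | Matrix.adjugate (Matrix.of A) ∈ B} = 0 := by
  classical
  open AdjugateNullAux Complex Matrix Set in
  haveI := vol_haar K
  have hK1 : K ≠ 1 := by omega
  -- the two families of null sets
  set Bq : ℂ → Set (Fin K → Fin K → ℂ) := fun q =>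
    {M | Matrix.of M ∈ B} ∩ {M | q * (Matrix.of M).det ∈ Complex.slitPlane} with hBq
  set N : ℂ → Set (Fin K → Fin K → ℂ) := fun q =>
    ⋃ u ∈ {u : ℂ | u ^ (K - 1) = q ^ (K - 2)}, gmap K q u '' Bq q with hN
  have hNq : ∀ q : ℂ, volume (N q) = 0 := by
    intro q
    refine (measure_biUnion_null_iff (tset_countable (K - 1) (by omega) _)).mpr fun u _ => ?_
    exact addHaar_image_eq_zero_of_differentiableOn_of_addHaar_eq_zero volume
      ((gmap_diffOn q u).mono Set.inter_subset_right)
      (measure_mono_null Set.inter_subset_left hB)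
  have hsub : {A : Fin K → Fin K → ℂ | Matrix.adjugate (Matrix.of A) ∈ B} ⊆
      {A : Fin K → Fin K → ℂ | (Matrix.of A).det = 0} ∪ (N 1 ∪ N Complex.I) := by
    intro A hA
    by_cases hd : (Matrix.of A).det = 0
    · exact Or.inl hd
    right
    set d : ℂ := (Matrix.of A).det with hdd
    set M : Fin K → Fin K → ℂ := fun i j => (Matrix.of A).adjugate i j with hMdef
    have hofM : Matrix.of M = (Matrix.of A).adjugate := rfl
    set z : ℂ := (Matrix.of M).det with hz
    have hzd : z = d ^ (K - 1) := by
      rw [hz, hofM, Matrix.det_adjugate, Fintype.card_fin]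
    have hz0 : z ≠ 0 := by rw [hzd]; exact pow_ne_zero _ hd
    -- choose the branch
    obtain ⟨q, hqmem, hqslit⟩ : ∃ q ∈ ({1, Complex.I} : Set ℂ),
        q * z ∈ Complex.slitPlane := by
      rcases slit_or hz0 with h | h
      · exact ⟨1, Set.mem_insert _ _, by rwa [one_mul]⟩
      · exact ⟨Complex.I, Set.mem_insert_of_mem _ rfl, h⟩
    have hq0 : q ≠ 0 := by
      rcases hqmem with rfl | rfl
      · exact one_ne_zero
      · exact Complex.I_ne_zero
    have hqz0 : q * z ≠ 0 := mul_ne_zero hq0 hz0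
    set w : ℂ := (q * z) ^ expo K with hw
    have hw0 : w ≠ 0 := by
      rw [hw]
      intro h
      exact hqz0 ((Complex.cpow_eq_zero_iff _ _).mp h).1
    set t : ℂ := d ^ ((2 : ℤ) - K) with ht
    set u : ℂ := t / w with hu
    have huw : u * w = t := div_mul_cancel₀ t hw0
    -- the power identities
    have hKcast : ((K - 1 : ℕ) : ℂ) = (K : ℂ) - 1 := by
      push_cast [Nat.cast_sub (by omega : 1 ≤ K)]
      ring
    have hKne : (K : ℂ) - 1 ≠ 0 := by
      rw [sub_ne_zero]
      exact_mod_cast (by omega : (K : ℕ) ≠ 1)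
    have hexpo : ((K - 1 : ℕ) : ℂ) * expo K = ((2 - (K : ℤ) : ℤ) : ℂ) := by
      rw [hKcast, expo]
      push_cast
      field_simp
    have hwpow : w ^ (K - 1) = (q * z) ^ ((2 : ℤ) - K) := by
      rw [hw, ← Complex.cpow_nat_mul, hexpo, Complex.cpow_intCast]
    have htpow : t ^ (K - 1) = z ^ ((2 : ℤ) - K) := by
      rw [ht, hzd]
      rw [← zpow_natCast (d ^ ((2 : ℤ) - K)) (K - 1), ← _root_.zpow_mul, mul_comm,
        _root_.zpow_mul, zpow_natCast]
    have humem : u ^ (K - 1) = q ^ (K - 2) := by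
      have hz2 : z ^ ((2 : ℤ) - K) ≠ 0 := zpow_ne_zero _ hz0
      rw [hu, div_pow, htpow, hwpow, mul_zpow]
      rw [div_eq_iff (by exact mul_ne_zero (zpow_ne_zero _ hq0) hz2)]
      have : ((K - 2 : ℕ) : ℤ) = (K : ℤ) - 2 := by omega
      rw [← zpow_natCast q (K - 2), this]
      rw [mul_left_comm, ← mul_assoc, ← zpow_add₀ hq0]
      norm_num
    -- the reconstruction identity
    have hadj2 : (Matrix.of M).adjugate = d ^ (K - 2) • Matrix.of A := by
      rw [hofM, Matrix.adjugate_adjugate _ (by rw [Fintype.card_fin]; exact hK1),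
        Fintype.card_fin, hdd]
    have hgA : gmap K q u M = A := by
      funext i j
      show (u * (q * (Matrix.of M).det) ^ expo K) * (Matrix.of M).adjugate i j = A i j
      rw [← hz, ← hw, huw, hadj2]
      have : (d ^ (K - 2) • Matrix.of A) i j = d ^ (K - 2) * A i j := rfl
      rw [this, ht, ← mul_assoc, ← zpow_natCast d (K - 2), ← zpow_add₀ hd]
      have h0 : (2 : ℤ) - K + (K - 2 : ℕ) = 0 := by omega
      rw [h0, zpow_zero, one_mul]
    have hMmem : M ∈ Bq q :=
      ⟨hA, show q * (Matrix.of M).det ∈ Complex.slitPlane by rw [← hz]; exact hqslit⟩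
    have hAN : A ∈ N q := by
      rw [hN]
      exact Set.mem_biUnion humem ⟨M, hMmem, hgA⟩
    rcases hqmem with rfl | rfl
    · exact Or.inl hAN
    · exact Or.inr hAN
  exact measure_mono_null hsub
    (measure_union_null (AdjugateNullAux.singular_null K)
      (measure_union_null (hNq 1) (hNq Complex.I)))
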